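/- (Semi-additivity) For every ε > 0 and t ∈ T, with T₁ = T ∩ (−∞,t] and T₂ = T ∩ [t,∞), one has V_ε(f,T₁) + V_ε(f,T₂) ≤ V_ε(f,T) ≤ V_ε(f,T₁) + V_ε(f,T₂) + 2ε. -/

import Mathlib

open Filter Set
open scoped ENNReal Topology

/-- The approximate (ε-)variation: infimum of Jordan variations of functions of
bounded variation uniformly ε-close to `f` on `T` (⊤ if no such function). -/
noncomputable def approxVar {M : Type*} [MetricSpace M] (f : ℝ → M) (T : Set ℝ) (ε : ℝ) : ℝ≥0∞ :=
  ⨅ (g : ℝ → M) (_ : eVariationOn g T ≠ ⊤ ∧ ∀ t ∈ T, dist (f t) (g t) ≤ ε),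
    eVariationOn g T

/-- The oscillation (diameter of the image) of `f` on `T`, valued in `[0,∞]`. -/
noncomputable def oscOn {M : Type*} [MetricSpace M] (f : ℝ → M) (T : Set ℝ) : ℝ≥0∞ :=
  ⨆ s ∈ T, ⨆ t ∈ T, edist (f s) (f t)

/-- If `g` and `g'` agree on `s` except possibly at the greatest element `m` of `s`, then
the variation of `g` exceeds that of `g'` by at most `edist (g m) (g' m)`. -/
lemma evar_le_of_eq_except_greatest {α : Type*} [LinearOrder α] {E : Type*}
    [PseudoEMetricSpace E] (g g' : α → E) {s : Set α} {m : α} (hm : IsGreatest s m)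
    (hgg' : ∀ x ∈ s, x < m → g x = g' x) :
    eVariationOn g s ≤ eVariationOn g' s + edist (g m) (g' m) := by
  apply iSup_le
  rintro ⟨n, u, hu, us⟩
  dsimp only
  by_cases hex : ∃ i, u i = m
  · obtain ⟨k, hk, hkmin⟩ : ∃ k, u k = m ∧ ∀ i < k, u i ≠ m :=
      ⟨Nat.find hex, Nat.find_spec hex, fun i hi => Nat.find_min hex hi⟩
    have hge : ∀ i, k ≤ i → u i = m := fun i hi =>
      le_antisymm (hm.2 (us i)) (hk ▸ hu hi)
    rcases k with _ | j
    · have hz : ∀ i ∈ Finset.range n, edist (g (u (i + 1))) (g (u i)) = 0 := fun i _ => by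
        rw [hge _ (Nat.zero_le _), hge _ (Nat.zero_le _), edist_self]
      rw [Finset.sum_eq_zero hz]
      exact zero_le
    · have hlt : ∀ i, i < j + 1 → u i < m := fun i hi =>
        (hm.2 (us i)).lt_of_ne (hkmin i hi)
      have key : ∀ i ∈ Finset.range n,
          edist (g (u (i + 1))) (g (u i)) ≤
            edist (g' (u (i + 1))) (g' (u i)) +
              (if i = j then edist (g m) (g' m) else 0) := by
        intro i _
        rcases lt_trichotomy i j with h | h | h
        · rw [if_neg h.ne, add_zero, hgg' _ (us i) (hlt i (by omega)),
            hgg' _ (us (i + 1)) (hlt (i + 1) (by omega))]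
        · subst h
          rw [if_pos rfl, hk, hgg' _ (us i) (hlt i (by omega))]
          calc edist (g m) (g' (u i))
              ≤ edist (g m) (g' m) + edist (g' m) (g' (u i)) := edist_triangle _ _ _
            _ = edist (g' m) (g' (u i)) + edist (g m) (g' m) := add_comm _ _
        · rw [hge i (by omega), hge (i + 1) (by omega), edist_self]
          exact zero_le
      calc ∑ i ∈ Finset.range n, edist (g (u (i + 1))) (g (u i))
          ≤ ∑ i ∈ Finset.range n, (edist (g' (u (i + 1))) (g' (u i)) +
              (if i = j then edist (g m) (g' m) else 0)) := Finset.sum_le_sum key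
        _ = (∑ i ∈ Finset.range n, edist (g' (u (i + 1))) (g' (u i))) +
              ∑ i ∈ Finset.range n, (if i = j then edist (g m) (g' m) else 0) :=
            Finset.sum_add_distrib
        _ ≤ eVariationOn g' s + edist (g m) (g' m) := by
            refine add_le_add (eVariationOn.sum_le (f := g') (n := n) hu us) ?_
            rw [Finset.sum_ite_eq' (Finset.range n) j]
            split <;> simp
  · have heq : ∀ i ∈ Finset.range n,
        edist (g (u (i + 1))) (g (u i)) = edist (g' (u (i + 1))) (g' (u i)) := by
      intro i _
      have h1 : ∀ i, u i < m := fun i =>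
        (hm.2 (us i)).lt_of_ne (fun h => hex ⟨i, h⟩)
      rw [hgg' _ (us i) (h1 i), hgg' _ (us (i + 1)) (h1 (i + 1))]
    rw [Finset.sum_congr rfl heq]
    exact le_trans (eVariationOn.sum_le (f := g') (n := n) hu us) le_self_add

theorem approxVar_semiadditive {M : Type*} [MetricSpace M] (f : ℝ → M) (T : Set ℝ)
    (hT : T.Nonempty) {ε : ℝ} (hε : 0 < ε) {t : ℝ} (ht : t ∈ T) :
    approxVar f (T ∩ Set.Iic t) ε + approxVar f (T ∩ Set.Ici t) ε ≤ approxVar f T ε ∧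
    approxVar f T ε ≤
      approxVar f (T ∩ Set.Iic t) ε + approxVar f (T ∩ Set.Ici t) ε + ENNReal.ofReal (2 * ε) := by
  have hgreat : IsGreatest (T ∩ Set.Iic t) t := ⟨⟨ht, Set.self_mem_Iic⟩, fun x hx => hx.2⟩
  have hleast : IsLeast (T ∩ Set.Ici t) t := ⟨⟨ht, Set.self_mem_Iic⟩, fun x hx => hx.2⟩
  have hsplit : ∀ h : ℝ → M,
      eVariationOn h T = eVariationOn h (T ∩ Set.Iic t) + eVariationOn h (T ∩ Set.Ici t) := by
    intro h
    rw [← eVariationOn.union h hgreat hleast, ← Set.inter_union_distrib_left,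
      Set.Iic_union_Ici, Set.inter_univ]
  constructor
  · -- lower bound
    refine le_iInf fun g => le_iInf fun hg => ?_
    obtain ⟨hgfin, hgcl⟩ := hg
    have h1 : approxVar f (T ∩ Set.Iic t) ε ≤ eVariationOn g (T ∩ Set.Iic t) :=
      iInf₂_le g ⟨fun h => hgfin (by
          rw [hsplit g, h, top_add] at * <;> exact (eVariationOn.mono g
            Set.inter_subset_left).antisymm le_top ▸ rfl),
        fun x hx => hgcl x hx.1⟩
    have h2 : approxVar f (T ∩ Set.Ici t) ε ≤ eVariationOn g (T ∩ Set.Ici t) :=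
      iInf₂_le g ⟨ne_top_of_le_ne_top hgfin (eVariationOn.mono g Set.inter_subset_left),
        fun x hx => hgcl x hx.1⟩
    calc approxVar f (T ∩ Set.Iic t) ε + approxVar f (T ∩ Set.Ici t) ε
        ≤ eVariationOn g (T ∩ Set.Iic t) + eVariationOn g (T ∩ Set.Ici t) := add_le_add h1 h2
      _ = eVariationOn g T := (hsplit g).symm
  · -- upper bound
    set A := approxVar f (T ∩ Set.Iic t) ε with hA
    set B := approxVar f (T ∩ Set.Ici t) ε with hB
    set c := ENNReal.ofReal (2 * ε) with hc
    have key : ∀ g₁ g₂ : ℝ → M,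
        (eVariationOn g₁ (T ∩ Set.Iic t) ≠ ⊤ ∧ ∀ x ∈ T ∩ Set.Iic t, dist (f x) (g₁ x) ≤ ε) →
        (eVariationOn g₂ (T ∩ Set.Ici t) ≠ ⊤ ∧ ∀ x ∈ T ∩ Set.Ici t, dist (f x) (g₂ x) ≤ ε) →
        approxVar f T ε ≤
          eVariationOn g₁ (T ∩ Set.Iic t) + eVariationOn g₂ (T ∩ Set.Ici t) + c := by
      rintro g₁ g₂ ⟨h1fin, h1cl⟩ ⟨h2fin, h2cl⟩
      set g : ℝ → M := fun x => if x < t then g₁ x else g₂ x with hgdef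
      have hg2 : Set.EqOn g g₂ (T ∩ Set.Ici t) := fun x hx => by
        simp only [hgdef, if_neg (not_lt.mpr (Set.mem_Ici.mp hx.2))]
      have hEq2 : eVariationOn g (T ∩ Set.Ici t) = eVariationOn g₂ (T ∩ Set.Ici t) :=
        eVariationOn.eq_of_eqOn hg2
      have hedist : edist (g t) (g₁ t) ≤ c := by
        have hgt : g t = g₂ t := by simp [hgdef]
        rw [hgt, edist_dist, hc]
        apply ENNReal.ofReal_le_ofReal
        calc dist (g₂ t) (g₁ t) ≤ dist (g₂ t) (f t) + dist (f t) (g₁ t) := dist_triangle _ _ _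
          _ ≤ ε + ε := by
              refine add_le_add ?_ (h1cl t ⟨ht, Set.self_mem_Iic⟩)
              rw [dist_comm]; exact h2cl t ⟨ht, Set.self_mem_Ici⟩
          _ = 2 * ε := by ring
      have hEq1 : eVariationOn g (T ∩ Set.Iic t) ≤ eVariationOn g₁ (T ∩ Set.Iic t) + c := by
        refine le_trans (evar_le_of_eq_except_greatest g g₁ hgreat ?_)
          (add_le_add_right hedist _)
        intro x _ hx
        simp only [hgdef, if_pos hx]
      have hvarT : eVariationOn g T ≤
          eVariationOn g₁ (T ∩ Set.Iic t) + eVariationOn g₂ (T ∩ Set.Ici t) + c := by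
        rw [hsplit g, hEq2]
        calc eVariationOn g (T ∩ Set.Iic t) + eVariationOn g₂ (T ∩ Set.Ici t)
            ≤ (eVariationOn g₁ (T ∩ Set.Iic t) + c) + eVariationOn g₂ (T ∩ Set.Ici t) :=
              add_le_add_left hEq1 _
          _ = eVariationOn g₁ (T ∩ Set.Iic t) + eVariationOn g₂ (T ∩ Set.Ici t) + c := by ring
      have hgfin : eVariationOn g T ≠ ⊤ := by
        intro h
        rw [h] at hvarT
        exact (lt_of_le_of_lt hvarT (by
          refine ENNReal.add_lt_top.mpr ⟨ENNReal.add_lt_top.mpr ⟨?_, ?_⟩, ?_⟩ <;>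
            simp [lt_top_iff_ne_top, h1fin, h2fin, hc, ENNReal.ofReal_ne_top, ENNReal.mul_eq_top])).ne rfl
      have hgcl : ∀ x ∈ T, dist (f x) (g x) ≤ ε := by
        intro x hx
        by_cases hxt : x < t
        · simpa [hgdef, if_pos hxt] using h1cl x ⟨hx, hxt.le⟩
        · simpa [hgdef, if_neg hxt] using h2cl x ⟨hx, not_lt.mp hxt⟩
      exact le_trans (iInf₂_le g ⟨hgfin, hgcl⟩) hvarT
    by_cases hAtop : A = ⊤
    · rw [hAtop, top_add, top_add]; exact le_top
    by_cases hBtop : B = ⊤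
    · rw [hBtop, add_top, top_add]; exact le_top
    refine ENNReal.le_of_forall_pos_le_add fun η hη hfin => ?_
    have hη2 : (0 : ℝ≥0∞) < (η : ℝ≥0∞) / 2 := by
      simp [ENNReal.div_pos_iff, hη.ne']
    have hAlt : A < A + (η : ℝ≥0∞) / 2 :=
      ENNReal.lt_add_right hAtop hη2.ne'
    have hBlt : B < B + (η : ℝ≥0∞) / 2 :=
      ENNReal.lt_add_right hBtop hη2.ne'
    rw [hA, approxVar, iInf_lt_iff] at hAlt
    obtain ⟨g₁, hg₁⟩ := hAlt
    rw [iInf_lt_iff] at hg₁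
    obtain ⟨hp₁, hv₁⟩ := hg₁
    rw [hB, approxVar, iInf_lt_iff] at hBlt
    obtain ⟨g₂, hg₂⟩ := hBlt
    rw [iInf_lt_iff] at hg₂
    obtain ⟨hp₂, hv₂⟩ := hg₂
    calc approxVar f T ε
        ≤ eVariationOn g₁ (T ∩ Set.Iic t) + eVariationOn g₂ (T ∩ Set.Ici t) + c :=
          key g₁ g₂ hp₁ hp₂
      _ ≤ (A + (η : ℝ≥0∞) / 2) + (B + (η : ℝ≥0∞) / 2) + c :=
          add_le_add_left (add_le_add hv₁.le hv₂.le) _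
      _ = A + B + c + (η : ℝ≥0∞) := by
          rw [add_add_add_comm A ((η : ℝ≥0∞) / 2) B ((η : ℝ≥0∞) / 2), ENNReal.add_halves]
          ring
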